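/- For integers $k \ge 3$ and $k \le n \le k(k-1)$, we have $g_k(n) = p(n,k)$, where $p(n,k)$ is the maximum product of parts over partitions of $n$ into $k$ nonnegative parts each less than $n$. -/
import Mathlib

/-- `p n k` : maximum of `∏ q i` over partitions of `n` into `k` nonnegative
parts each strictly less than `n` (so `p 0 0 = 1`). -/
noncomputable def p (n k : ℕ) : ℕ :=
  sSup {m | ∃ q : Fin k → ℕ, (∑ i, q i) = n ∧ (∀ i, q i < n) ∧ m = ∏ i, q i}

/-- The Erdős–Hajnal function `g k s`: `g k s = 0` for `s < k` and otherwise the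
maximum of `∑ i, g k (s i) + ∏ i, s i` over nontrivial partitions of `s` into `k` parts. -/
noncomputable def g (k : ℕ) (s : ℕ) : ℕ :=
  Nat.strongRecOn s fun s ih =>
    if s < k then 0
    else sSup {m | ∃ q : Fin k → ℕ, ∃ h : ∀ i, q i < s,
      (∑ i, q i) = s ∧ m = (∑ i, ih (q i) (h i)) + ∏ i, q i}


/-- ceiling division -/
def cdiv (x m : ℕ) : ℕ := (x + m - 1) / m

/-- balanced product of `x` into `j` parts -/
def bal (j x : ℕ) : ℕ :=
  if j = 0 then (if x = 0 then 1 else 0) else (x / j + 1) ^ (x % j) * (x / j) ^ (j - x % j)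

lemma bal_eval {j : ℕ} (d r : ℕ) (hj : 0 < j) (hr : r < j) :
    bal j (j * d + r) = (d + 1) ^ r * d ^ (j - r) := by
  have h1 : (j * d + r) / j = d := by
    rw [Nat.mul_add_div hj, Nat.div_eq_of_lt hr, Nat.add_zero]
  have h2 : (j * d + r) % j = r := by
    rw [Nat.mul_add_mod, Nat.mod_eq_of_lt hr]
  simp [bal, hj.ne', h1, h2]

lemma bal_zero_of_lt {j x : ℕ} (hj : 0 < j) (h : x < j) : bal j x = 0 := by
  have := bal_eval 0 x hj h
  simp only [Nat.mul_zero, Nat.zero_add] at this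
  rw [this, zero_pow (by omega : j - x ≠ 0), Nat.mul_zero]

lemma cdiv_mul (j d : ℕ) (hj : 0 < j) : cdiv (j * d) j = d := by
  unfold cdiv
  have h : j * d + j - 1 = j * d + (j - 1) := by omega
  rw [h, Nat.mul_add_div hj, Nat.div_eq_of_lt (by omega), Nat.add_zero]

lemma cdiv_mul_add (j d r : ℕ) (hr : 0 < r) (hrj : r < j) : cdiv (j * d + r) j = d + 1 := by
  unfold cdiv
  have hj : 0 < j := by omega
  have h : j * d + r + j - 1 = j * (d + 1) + (r - 1) := by
    have : j * (d + 1) = j * d + j := by ring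
    omega
  rw [h, Nat.mul_add_div hj, Nat.div_eq_of_lt (by omega), Nat.add_zero]

lemma le_mul_cdiv (x j : ℕ) (hj : 0 < j) : x ≤ j * cdiv x j := by
  obtain ⟨d, r, hr, rfl⟩ : ∃ d r, r < j ∧ x = j * d + r :=
    ⟨x / j, x % j, Nat.mod_lt x hj, (Nat.div_add_mod x j).symm⟩
  rcases Nat.eq_zero_or_pos r with rfl | hr0
  · rw [Nat.add_zero, cdiv_mul _ _ hj]
  · rw [cdiv_mul_add _ _ _ hr0 hr]; nlinarith
lemma cdiv_le_of_le_mul {x j y : ℕ} (hj : 0 < j) (h : x ≤ j * y) : cdiv x j ≤ y := by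
  unfold cdiv
  have : x + j - 1 ≤ j * y + (j - 1) := by omega
  calc (x + j - 1) / j ≤ (j * y + (j - 1)) / j := Nat.div_le_div_right this
  _ = y := by rw [Nat.mul_add_div hj, Nat.div_eq_of_lt (by omega), Nat.add_zero]

lemma cdiv_le (x j : ℕ) (hj : 0 < j) : cdiv x j ≤ x :=
  cdiv_le_of_le_mul hj (Nat.le_mul_of_pos_left x hj)

lemma cdiv_mono {x y : ℕ} (j : ℕ) (hj : 0 < j) (h : x ≤ y) : cdiv x j ≤ cdiv y j :=
  cdiv_le_of_le_mul hj (h.trans (le_mul_cdiv y j hj))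

lemma cdiv_subadd (a b j : ℕ) (hj : 0 < j) : cdiv (a + b) j ≤ cdiv a j + cdiv b j := by
  apply cdiv_le_of_le_mul hj
  calc a + b ≤ j * cdiv a j + j * cdiv b j :=
    Nat.add_le_add (le_mul_cdiv a j hj) (le_mul_cdiv b j hj)
  _ = j * (cdiv a j + cdiv b j) := by ring

/-- the basic difference identity: `bal j (x+1) = bal j x + bal (j-1) (x + 1 - cdiv (x+1) j)` -/
lemma bal_succ (j x : ℕ) (hj : 0 < j) :
    bal j (x + 1) = bal j x + bal (j - 1) (x + 1 - cdiv (x + 1) j) := by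
  obtain ⟨d, r, hr, hx⟩ : ∃ d r, r < j ∧ x + 1 = j * d + r :=
    ⟨(x+1) / j, (x+1) % j, Nat.mod_lt _ hj, (Nat.div_add_mod _ j).symm⟩
  rcases Nat.eq_zero_or_pos r with rfl | hr0
  · have hd : 0 < d := by
      rcases Nat.eq_zero_or_pos d with rfl | h
      · simp at hx
      · exact h
    obtain ⟨e, rfl⟩ : ∃ e, d = e + 1 := ⟨d - 1, by omega⟩
    have hxx : x + 1 = j * (e + 1) := by omega
    have hcd : cdiv (x + 1) j = e + 1 := by rw [hxx]; exact cdiv_mul _ _ hj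
    have hnew : bal j (x + 1) = (e + 1) ^ j := by
      rw [show x + 1 = j * (e + 1) + 0 by omega, bal_eval _ _ hj hj]
      simp
    have hold : bal j x = (e + 1) ^ (j - 1) * e := by
      have h5 : j * (e + 1) = j * e + j := by ring
      have hx' : x = j * e + (j - 1) := by omega
      rw [hx', bal_eval _ _ hj (by omega), show j - (j - 1) = 1 by omega, pow_one]
    have harg : x + 1 - cdiv (x + 1) j = (j - 1) * (e + 1) := by
      rw [hcd]
      have h6 : j * (e + 1) = (j - 1) * (e + 1) + (e + 1) := by
        have h7 : j = (j - 1) + 1 := by omega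
        calc j * (e+1) = ((j-1) + 1) * (e+1) := by rw [← h7]
        _ = (j - 1) * (e + 1) + (e + 1) := by ring
      omega
    rcases Nat.eq_zero_or_pos (j - 1) with hj0 | hj1
    · have hj' : j = 1 := by omega
      subst hj'
      rw [hnew, hold, harg]
      norm_num [bal]
    · have hrest : bal (j - 1) ((j - 1) * (e + 1)) = (e + 1) ^ (j - 1) := by
        rw [show (j-1) * (e+1) = (j-1) * (e+1) + 0 by omega, bal_eval _ _ hj1 hj1]
        simp
      rw [hnew, hold, harg, hrest]
      have h8 : (e + 1) ^ j = (e + 1) ^ (j - 1) * (e + 1) := by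
        rw [← pow_succ]
        congr 1
        omega
      rw [h8]
      ring
  · obtain ⟨s, rfl⟩ : ∃ s, r = s + 1 := ⟨r - 1, by omega⟩
    have hj1 : 0 < j - 1 := by omega
    have hcd : cdiv (x + 1) j = d + 1 := by rw [hx]; exact cdiv_mul_add _ _ _ hr0 hr
    have hnew : bal j (x + 1) = (d + 1) ^ (s + 1) * d ^ (j - (s + 1)) := by
      rw [hx, bal_eval _ _ hj hr]
    have hold : bal j x = (d + 1) ^ s * d ^ (j - s) := by
      rw [show x = j * d + s by omega, bal_eval _ _ hj (by omega)]
    have harg : x + 1 - cdiv (x + 1) j = (j - 1) * d + s := by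
      rw [hcd]
      have h6 : j * d = (j - 1) * d + d := by
        have h7 : j = (j - 1) + 1 := by omega
        calc j * d = ((j-1) + 1) * d := by rw [← h7]
        _ = (j - 1) * d + d := by ring
      omega
    have hrest : bal (j - 1) ((j - 1) * d + s) = (d + 1) ^ s * d ^ (j - 1 - s) := by
      rw [bal_eval _ _ hj1 (by omega)]
    rw [hnew, hold, harg, hrest]
    have e2 : j - s = (j - (s + 1)) + 1 := by omega
    have e3 : j - 1 - s = j - (s + 1) := by omega
    rw [pow_succ, e2, e3, pow_succ]
    ring

lemma bal_le_succ (j x : ℕ) (hj : 0 < j) : bal j x ≤ bal j (x + 1) := by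
  rw [bal_succ j x hj]; omega

lemma bal_mono {x y : ℕ} (j : ℕ) (hj : 0 < j) (h : x ≤ y) : bal j x ≤ bal j y := by
  induction y with
  | zero => simp [Nat.le_zero.mp h]
  | succ n ih =>
    rcases Nat.lt_or_ge x (n+1) with h' | h'
    · exact (ih (by omega)).trans (bal_le_succ j n hj)
    · have hx : x = n + 1 := by omega
      rw [hx]

/-- removing one largest part -/
lemma bal_max (j x : ℕ) (hj : 0 < j) :
    bal j x = cdiv x j * bal (j - 1) (x - cdiv x j) := by
  obtain ⟨d, r, hr, hx⟩ : ∃ d r, r < j ∧ x = j * d + r :=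
    ⟨x / j, x % j, Nat.mod_lt _ hj, (Nat.div_add_mod _ j).symm⟩
  have h6 : j * d = (j - 1) * d + d := by
    have h7 : j = (j - 1) + 1 := by omega
    calc j * d = ((j-1) + 1) * d := by rw [← h7]
    _ = (j - 1) * d + d := by ring
  rcases Nat.eq_zero_or_pos r with rfl | hr0
  · rw [Nat.add_zero] at hx
    subst hx
    rw [cdiv_mul _ _ hj]
    rcases Nat.eq_zero_or_pos (j - 1) with hj0 | hj1
    · have hj' : j = 1 := by omega
      subst hj'
      simp [bal, Nat.mod_one]
    · have harg : j * d - d = (j - 1) * d := by omega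
      rw [harg, show (j-1)*d = (j-1)*d + 0 by omega, bal_eval _ _ hj1 hj1,
        show j * d = j * d + 0 by omega, bal_eval _ _ hj hj]
      simp only [pow_zero, one_mul, Nat.sub_zero]
      have : d ^ j = d * d ^ (j - 1) := by
        rw [← pow_succ']
        congr 1
        omega
      rw [this]
  · subst hx
    rw [cdiv_mul_add _ _ _ hr0 hr]
    have hj1 : 0 < j - 1 := by omega
    have harg : j * d + r - (d + 1) = (j - 1) * d + (r - 1) := by omega
    rw [harg, bal_eval _ _ hj1 (by omega), bal_eval _ _ hj hr]
    have e1 : r = (r - 1) + 1 := by omega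
    have e2 : j - 1 - (r - 1) = j - r := by omega
    rw [e2]
    calc (d+1) ^ r * d ^ (j - r) = (d+1) ^ ((r-1)+1) * d ^ (j-r) := by rw [← e1]
    _ = (d + 1) * ((d+1) ^ (r-1) * d ^ (j - r)) := by rw [pow_succ]; ring

/-- removing one smallest part -/
lemma bal_min (j c : ℕ) : bal (j + 1) c = c / (j + 1) * bal j (c - c / (j + 1)) := by
  obtain ⟨d, r, hr, hc⟩ : ∃ d r, r < j + 1 ∧ c = (j + 1) * d + r :=
    ⟨c / (j+1), c % (j+1), Nat.mod_lt _ (by omega), (Nat.div_add_mod _ _).symm⟩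
  have hdiv : c / (j + 1) = d := by
    subst hc
    rw [Nat.mul_add_div (by omega), Nat.div_eq_of_lt hr, Nat.add_zero]
  rcases Nat.eq_zero_or_pos j with rfl | hj
  · subst hc
    simp only [Nat.zero_add] at *
    rw [hdiv]
    have : r = 0 := by omega
    subst this
    simp [bal, Nat.mod_one]
  · have harg : c - c / (j + 1) = j * d + r := by
      subst hc
      rw [hdiv]
      have : (j + 1) * d = j * d + d := by ring
      omega
    rw [harg, hdiv]
    rcases Nat.lt_or_ge r j with hrj | hrj
    · rw [bal_eval _ _ hj hrj, hc, bal_eval _ _ (by omega : 0 < j + 1) hr]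
      have e2 : j + 1 - r = (j - r) + 1 := by omega
      rw [e2, pow_succ]
      ring
    · have hrj' : r = j := by omega
      have h30 : j * (d + 1) = j * d + j := by ring
      have e3 : j * d + r = j * (d + 1) + 0 := by omega
      rw [e3, bal_eval _ _ hj hj, hc, bal_eval _ _ (by omega : 0 < j + 1) hr]
      rw [show j + 1 - r = 1 by omega, hrj', pow_one]
      simp only [pow_zero, one_mul, Nat.sub_zero]
      ring

lemma bal_rec (j c : ℕ) : ∀ t v, v + t = c / (j + 1) → v * bal j (c - v) ≤ bal (j + 1) c := by
  intro t
  induction t with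
  | zero =>
    intro v hv
    rw [Nat.add_zero] at hv
    subst hv
    rw [← bal_min]
  | succ t ih =>
    intro v hv
    have hvd : v + 1 ≤ c / (j + 1) := by omega
    have hcv : (j + 1) * (v + 1) ≤ c := by
      calc (j+1) * (v+1) ≤ (j+1) * (c / (j+1)) := Nat.mul_le_mul_left _ hvd
      _ ≤ c := Nat.mul_div_le c (j+1)
    have hx1 : 0 < c - v := by
      have h8 : v + 1 ≤ (j + 1) * (v + 1) := Nat.le_mul_of_pos_left (v+1) (by omega)
      omega
    rcases Nat.eq_zero_or_pos j with rfl | hj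
    · -- arity 1 : bal 1 y = y
      have b1 : ∀ y, bal 1 y = y := by
        intro y
        obtain ⟨e, rfl⟩ : ∃ e, y = 1 * e + 0 := ⟨y, by omega⟩
        rw [bal_eval _ _ (by omega) (by omega)]
        simp
      have h0 : ∀ y, bal 0 y ≤ 1 := by
        intro y
        by_cases hy : y = 0 <;> simp [bal, hy]
      calc v * bal 0 (c - v) ≤ v * 1 := Nat.mul_le_mul_left _ (h0 _)
      _ ≤ c := by omega
      _ = bal (0 + 1) c := (b1 c).symm
    · -- step : v * bal j (c - v) ≤ (v+1) * bal j (c - (v+1))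
      have step : v * bal j (c - v) ≤ (v + 1) * bal j (c - (v + 1)) := by
        set x := c - v with hxdef
        have hx : 0 < x := hx1
        set e := cdiv x j with hedef
        set T := bal (j - 1) (x - cdiv x j) with hTdef
        set B := bal j (x - 1) with hBdef
        have hmax : bal j x = e * T := bal_max j x hj
        have hBT : B + T = e * T := by
          have h20 := bal_succ j (x - 1) hj
          rw [show x - 1 + 1 = x by omega] at h20
          rw [← hmax, h20]
        have he : v + 2 ≤ e := by
          have h9 : j * (v + 1) + 1 ≤ x := by
            have : (j + 1) * (v + 1) = j * (v + 1) + (v + 1) := by ring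
            omega
          have h10 : x ≤ j * e := le_mul_cdiv x j hj
          have : j * (v + 1) + 1 ≤ j * e := h9.trans h10
          by_contra hcon
          push_neg at hcon
          have : e ≤ v + 1 := by omega
          have : j * e ≤ j * (v + 1) := Nat.mul_le_mul_left _ this
          omega
        have harg2 : c - (v + 1) = x - 1 := by omega
        rw [harg2, hmax, ← hBdef]
        have h1 : (v + 2) * T ≤ e * T := Nat.mul_le_mul_right _ he
        have h2 : (v + 2) * T = v * T + T + T := by ring
        have g1 : v * (e * T) = v * B + v * T := by
          rw [← hBT]; ring
        have g2 : (v + 1) * B = v * B + B := by ring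
        omega
      exact step.trans (ih (v + 1) (by omega))

lemma exists_min_fin {j : ℕ} (q : Fin (j + 1) → ℕ) : ∃ i0, ∀ i, q i0 ≤ q i := by
  obtain ⟨i0, -, h⟩ := Finset.exists_min_image Finset.univ q ⟨0, Finset.mem_univ 0⟩
  exact ⟨i0, fun i => h i (Finset.mem_univ i)⟩

lemma prod_le_bal : ∀ (j : ℕ) (q : Fin j → ℕ) (c : ℕ), (∑ i, q i) = c → ∏ i, q i ≤ bal j c := by
  intro j
  induction j with
  | zero =>
    intro q c hc
    simp only [Finset.univ_eq_empty, Finset.sum_empty] at hc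
    subst hc
    simp [bal]
  | succ j ih =>
    intro q c hc
    obtain ⟨i0, hmin⟩ := exists_min_fin q
    have hsum : q i0 + ∑ i : Fin j, q (i0.succAbove i) = c := by
      rw [← hc, Fin.sum_univ_succAbove q i0]
    have hprod : ∏ i, q i = q i0 * ∏ i : Fin j, q (i0.succAbove i) :=
      Fin.prod_univ_succAbove q i0
    have hle : q i0 ≤ c / (j + 1) := by
      rw [Nat.le_div_iff_mul_le (by omega : 0 < j + 1)]
      calc q i0 * (j + 1) = Finset.univ.card • q i0 := by simp [mul_comm]
      _ ≤ ∑ i, q i := Finset.card_nsmul_le_sum _ _ _ (fun i _ => hmin i)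
      _ = c := hc
    calc ∏ i, q i = q i0 * ∏ i : Fin j, q (i0.succAbove i) := hprod
    _ ≤ q i0 * bal j (c - q i0) := Nat.mul_le_mul_left _ (ih _ _ (by omega))
    _ ≤ bal (j + 1) c := bal_rec j c (c / (j + 1) - q i0) (q i0) (by omega)

lemma sub_cdiv_mono (j : ℕ) (hj : 0 < j) {x y : ℕ} (h : x ≤ y) :
    x - cdiv x j ≤ y - cdiv y j := by
  have h1 : cdiv y j ≤ cdiv x j + cdiv (y - x) j := by
    have h2 := cdiv_subadd x (y - x) j hj
    rw [show x + (y - x) = y by omega] at h2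
    exact h2
  have h2 : cdiv (y - x) j ≤ y - x := cdiv_le _ _ hj
  have h3 : cdiv x j ≤ x := cdiv_le _ _ hj
  omega

lemma bal_of_le {j m : ℕ} (hj : 0 < j) (h1 : j ≤ m) (h2 : m < 2 * j) : bal j m = 2 ^ (m - j) := by
  rw [show m = j * 1 + (m - j) by omega, bal_eval _ _ hj (by omega)]
  simp

lemma pow_aux (b : ℕ) : ∀ r, b ^ (r + 1) + r * b ^ r ≤ b * (b + 1) ^ r := by
  intro r
  induction r with
  | zero => simp
  | succ r ih =>
    have h2 : (b ^ (r+1) + r * b ^ r) * (b + 1) ≤ (b * (b+1) ^ r) * (b + 1) :=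
      Nat.mul_le_mul_right _ ih
    have e1 : (b ^ (r+1) + r * b ^ r) * (b + 1) =
        b ^ (r+2) + b ^ (r+1) + r * b ^ (r+1) + r * b ^ r := by ring
    have e2 : b * (b+1) ^ (r+1) = (b * (b+1) ^ r) * (b + 1) := by ring
    have e3 : (r + 1) * b ^ (r + 1) = r * b ^ (r+1) + b ^ (r+1) := by ring
    have e0 : b ^ (r + 1 + 1) = b ^ (r + 2) := by ring
    omega

lemma bal_double (j M : ℕ) (hj : 0 < j) (hd : M / j + 1 ≤ j) : 2 * bal j M ≤ bal j (M + j) := by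
  rcases Nat.lt_or_ge M j with h | h
  · rw [bal_zero_of_lt hj h]
    simp
  · obtain ⟨d, r, hr, hM⟩ : ∃ d r, r < j ∧ M = j * d + r :=
      ⟨M / j, M % j, Nat.mod_lt _ hj, (Nat.div_add_mod _ j).symm⟩
    have hdval : M / j = d := by
      rw [hM, Nat.mul_add_div hj, Nat.div_eq_of_lt hr, Nat.add_zero]
    have hdj : d + 1 ≤ j := by omega
    have hd1 : 1 ≤ d := by
      by_contra hcon
      push_neg at hcon
      interval_cases d
      simp at hM
      omega
    have hMj : M + j = j * (d + 1) + r := by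
      have : j * (d + 1) = j * d + j := by ring
      omega
    rw [hMj, hM, bal_eval (d+1) r hj hr, bal_eval d r hj hr]
    obtain ⟨mm, hmm, hmm1⟩ : ∃ mm, j = r + mm ∧ 1 ≤ mm := ⟨j - r, by omega, by omega⟩
    set B := (d + 1) ^ r * d ^ (j - r) with hB
    have hX := pow_aux (d + 1) r
    have hY := pow_aux d (j - r)
    have hXY : ((d+1) ^ (r+1) + r * (d+1) ^ r) * (d ^ (j-r+1) + (j-r) * d ^ (j-r)) ≤
        ((d+1) * (d+2) ^ r) * (d * (d+1) ^ (j-r)) := by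
      have := Nat.mul_le_mul hX hY
      convert this using 2 <;> ring
    have hexp : ((d+1) ^ (r+1) + r * (d+1) ^ r) * (d ^ (j-r+1) + (j-r) * d ^ (j-r)) =
        B * ((d+1) * d) + B * ((j-r) * (d+1)) + B * (r * d) +
          (r * (d+1) ^ r) * ((j-r) * d ^ (j-r)) := by
      simp only [hB]
      ring
    have hcoef : 2 * ((d+1) * d) ≤ (d+1) * d + (j-r) * (d+1) + r * d := by
      have h4 : d + 1 ≤ mm + r := by omega
      have h5 : (d + 1) * d ≤ (mm + r) * d := Nat.mul_le_mul_right d h4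
      have h6 : j - r = mm := by omega
      rw [h6]
      nlinarith
    have hfin : ((d+1) * d) * (2 * B) ≤ ((d+1) * d) * ((d+2) ^ r * (d+1) ^ (j-r)) := by
      calc ((d+1) * d) * (2 * B) = B * (2 * ((d+1) * d)) := by ring
      _ ≤ B * ((d+1) * d + (j-r) * (d+1) + r * d) := Nat.mul_le_mul_left _ hcoef
      _ = B * ((d+1) * d) + B * ((j-r) * (d+1)) + B * (r * d) := by ring
      _ ≤ ((d+1) ^ (r+1) + r * (d+1) ^ r) * (d ^ (j-r+1) + (j-r) * d ^ (j-r)) := by omega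
      _ ≤ ((d+1) * (d+2) ^ r) * (d * (d+1) ^ (j-r)) := hXY
      _ = ((d+1) * d) * ((d+2) ^ r * (d+1) ^ (j-r)) := by ring
    exact Nat.le_of_mul_le_mul_left hfin (by positivity)

/-- The key inequality. -/
lemma key (k a n : ℕ) (hk : 3 ≤ k) (hka : k ≤ a) (han : a + 1 ≤ n)
    (hav : n ≤ a * k) (hnk : n ≤ k * (k - 1)) :
    bal (k - 1) (a - cdiv a k) + bal (k - 1) (n - a) ≤ bal (k - 1) (n - cdiv n k) := by
  obtain ⟨i, rfl⟩ : ∃ i, k = i + 3 := ⟨k - 3, by omega⟩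
  have hsub1 : i + 3 - 1 = i + 2 := by omega
  rw [hsub1] at hnk ⊢
  set k := i + 3 with hkdef
  set j := i + 2 with hjdef
  have hj0 : 0 < j := by omega
  have hk0 : 0 < k := by omega
  have hca : cdiv a k ≤ a := cdiv_le a k hk0
  have hcn : cdiv n k ≤ n := cdiv_le n k hk0
  have hcw : cdiv (n - a) k ≤ n - a := cdiv_le (n - a) k hk0
  have hmono : cdiv a k ≤ cdiv n k := cdiv_mono k hk0 (by omega)
  have hsubadd : cdiv n k ≤ cdiv a k + cdiv (n - a) k := by
    have h2 := cdiv_subadd a (n - a) k hk0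
    rw [show a + (n - a) = n by omega] at h2
    exact h2
  have hwk : cdiv (n - a) k ≤ i + 1 := by
    apply cdiv_le_of_le_mul hk0
    have h3 : k * j = k * (i + 1) + k := by rw [hkdef, hjdef]; ring
    omega
  have hvj : j ≤ a - cdiv a k := by
    have h1 : a ≤ k * (a - k + 1) := by
      obtain ⟨b, rfl⟩ : ∃ b, a = k + b := ⟨a - k, by omega⟩
      have e : k + b - k + 1 = b + 1 := by omega
      rw [e]
      nlinarith
    have h2 := cdiv_le_of_le_mul hk0 h1
    omega
  have hwu : n - a ≤ n - cdiv n k := by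
    have h1 : cdiv n k ≤ a := by
      apply cdiv_le_of_le_mul hk0
      have : k * a = a * k := by ring
      omega
    omega
  have huj : n - cdiv n k ≤ j * j := by
    have h1 : n ≤ k * cdiv n k := le_mul_cdiv n k hk0
    have h2 : k * (n - cdiv n k) = k * n - k * cdiv n k := by rw [Nat.mul_sub]
    have h3 : k * n = n * j + n := by rw [hkdef, hjdef]; ring
    have h4 : n * j ≤ (k * j) * j := Nat.mul_le_mul_right j hnk
    have h5 : (k * j) * j = k * (j * j) := by ring
    have h6 : k * (n - cdiv n k) ≤ k * (j * j) := by omega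
    exact Nat.le_of_mul_le_mul_left h6 hk0
  set v := a - cdiv a k with hv
  set w := n - a with hw
  set u := n - cdiv n k with hu
  set t := cdiv n k - cdiv a k with htdef
  have hvwu : v + w = u + t := by omega
  have htw : t ≤ cdiv w k := by omega
  have htj : t ≤ i + 1 := by omega
  rcases Nat.lt_or_ge w j with hwj | hwj
  · rw [bal_zero_of_lt hj0 hwj, Nat.add_zero]
    exact bal_mono j hj0 (by omega)
  · set M := max v w with hM
    set m := min v w with hm
    have hmj : j ≤ m := le_min hvj hwj
    have hMm : M + m = v + w := max_add_min v w
    have htm : t < m := by omega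
    have hMu : M + (m - t) = u := by omega
    have hgoal : bal j v + bal j w = bal j M + bal j m := by
      rcases le_total v w with h | h
      · rw [hM, hm, max_eq_right h, min_eq_left h, Nat.add_comm]
      · rw [hM, hm, max_eq_left h, min_eq_right h]
    rw [hgoal]
    rcases Nat.lt_or_ge (m - t) j with hg | hg
    · -- small gap : m ≤ 2j - 2
      have hm2 : m ≤ 2 * j - 2 := by omega
      have hbm : bal j m = 2 ^ (m - j) := bal_of_le hj0 hmj (by omega)
      have hstep : bal j (M + 1) = bal j M + bal (j - 1) (M + 1 - cdiv (M + 1) j) :=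
        bal_succ j M hj0
      have hargm : (m + 1) - cdiv (m + 1) j = m - 1 := by
        have h7 : cdiv (m + 1) j = 2 := by
          rw [show m + 1 = j * 1 + (m + 1 - j) by omega,
            cdiv_mul_add j 1 _ (by omega) (by omega)]
        omega
      have hargM : m - 1 ≤ (M + 1) - cdiv (M + 1) j := by
        have h8 := sub_cdiv_mono j hj0 (show m + 1 ≤ M + 1 by omega)
        omega
      have hblow : bal (j - 1) (m - 1) = 2 ^ (m - j) := by
        have e := bal_of_le (j := j - 1) (m := m - 1) (by omega) (by omega) (by omega)
        rw [e]
        congr 1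
        omega
      calc bal j M + bal j m = bal j M + bal (j - 1) (m - 1) := by rw [hbm, hblow]
      _ ≤ bal j M + bal (j - 1) ((M + 1) - cdiv (M + 1) j) :=
          Nat.add_le_add_left (bal_mono (j - 1) (by omega) hargM) _
      _ = bal j (M + 1) := hstep.symm
      _ ≤ bal j u := bal_mono j hj0 (by omega)
    · -- big gap : u ≥ M + j
      have hdM : M / j + 1 ≤ j := by
        have h1 : M + j ≤ u := by omega
        have h2 : j * j = j * (i + 1) + j := by rw [hjdef]; ring
        have h3 : M ≤ j * (i + 1) := by omega
        have h4 : M / j ≤ (j * (i + 1)) / j := Nat.div_le_div_right h3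
        rw [Nat.mul_div_cancel_left _ hj0] at h4
        omega
      calc bal j M + bal j m ≤ bal j M + bal j M :=
          Nat.add_le_add_left (bal_mono j hj0 (min_le_max)) _
      _ = 2 * bal j M := by ring
      _ ≤ bal j (M + j) := bal_double j M hj0 hdM
      _ ≤ bal j u := bal_mono j hj0 (by omega)

lemma star (k : ℕ) (hk : 3 ≤ k) : ∀ n, k ≤ n → n ≤ k * (k - 1) →
    ∀ q : Fin k → ℕ, (∀ i, q i < n) → (∑ i, q i) = n →
    (∑ i, bal k (q i)) + ∏ i, q i ≤ bal k n := by
  intro n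
  induction n using Nat.strongRecOn with
  | ind n IH =>
  intro hn hn' q hlt hsum
  have hk0 : 0 < k := by omega
  by_cases hall : ∀ i, q i < k
  · have hzero : (∑ i, bal k (q i)) = 0 :=
      Finset.sum_eq_zero fun i _ => bal_zero_of_lt hk0 (hall i)
    rw [hzero, Nat.zero_add]
    exact prod_le_bal k q n hsum
  · push_neg at hall
    obtain ⟨j, hkj⟩ : ∃ j, k = j + 1 := ⟨k - 1, by omega⟩
    subst hkj
    obtain ⟨iw, hiw⟩ := hall
    obtain ⟨i0, -, hmax⟩ := Finset.exists_max_image Finset.univ q ⟨iw, Finset.mem_univ iw⟩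
    have hmax' : ∀ i, q i ≤ q i0 := fun i => hmax i (Finset.mem_univ i)
    set a := q i0 with ha
    have hka : j + 1 ≤ a := le_trans hiw (hmax' iw)
    have han : a < n := hlt i0
    have hsum0 : ∑ i2, q i2 = a + ∑ i2 : Fin j, q (i0.succAbove i2) :=
      Fin.sum_univ_succAbove q i0
    have hsum' : a + ∑ i2 : Fin j, q (i0.succAbove i2) = n := by omega
    set P := ∏ i2 : Fin j, q (i0.succAbove i2) with hP
    set S := ∑ i2 : Fin j, bal (j+1) (q (i0.succAbove i2)) with hS
    have hprodd : ∏ i2, q i2 = a * P := Fin.prod_univ_succAbove q i0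
    have hsumbal : ∑ i2, bal (j+1) (q i2) = bal (j+1) a + S :=
      Fin.sum_univ_succAbove (fun i2 => bal (j+1) (q i2)) i0
    set q' : Fin (j+1) → ℕ := Function.update q i0 (a - 1) with hq'
    have hq'i0 : q' i0 = a - 1 := Function.update_self i0 (a-1) q
    have hq'ne : ∀ i2 : Fin j, q' (i0.succAbove i2) = q (i0.succAbove i2) := fun i2 =>
      Function.update_of_ne (Fin.succAbove_ne i0 i2) _ _
    have hrest_le : ∀ i2 : Fin j, q (i0.succAbove i2) ≤ n - a := by
      intro i2
      have h1 : q (i0.succAbove i2) ≤ ∑ i2 : Fin j, q (i0.succAbove i2) :=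
        Finset.single_le_sum (f := fun i2 : Fin j => q (i0.succAbove i2))
          (fun _ _ => Nat.zero_le _) (Finset.mem_univ i2)
      omega
    have hlt' : ∀ i2, q' i2 < n - 1 := by
      intro i2
      rcases eq_or_ne i2 i0 with rfl | hne
      · rw [hq'i0]; omega
      · rw [hq', Function.update_of_ne hne]
        obtain ⟨i3, rfl⟩ := Fin.exists_succAbove_eq hne
        have := hrest_le i3
        omega
    have hsum'' : ∑ i2, q' i2 = n - 1 := by
      have h2 : ∑ i2, q' i2 = q' i0 + ∑ i2 : Fin j, q' (i0.succAbove i2) :=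
        Fin.sum_univ_succAbove q' i0
      have h3 : ∑ i2 : Fin j, q' (i0.succAbove i2) = ∑ i2 : Fin j, q (i0.succAbove i2) :=
        Finset.sum_congr rfl (fun i2 _ => hq'ne i2)
      rw [h2, h3, hq'i0]
      omega
    have IHn := IH (n-1) (by omega) (by omega) (by omega) q' hlt' hsum''
    have hsb' : ∑ i2, bal (j+1) (q' i2) = bal (j+1) (a-1) + S := by
      have h2 : ∑ i2, bal (j+1) (q' i2) =
          bal (j+1) (q' i0) + ∑ i2 : Fin j, bal (j+1) (q' (i0.succAbove i2)) :=
        Fin.sum_univ_succAbove (fun i2 => bal (j+1) (q' i2)) i0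
      rw [h2, hq'i0]
      congr 1
      exact Finset.sum_congr rfl (fun i2 _ => by rw [hq'ne i2])
    have hp' : ∏ i2, q' i2 = (a-1) * P := by
      rw [Fin.prod_univ_succAbove q' i0, hq'i0]
      congr 1
      exact Finset.prod_congr rfl (fun i2 _ => hq'ne i2)
    have hd_a : bal (j+1) a = bal (j+1) (a-1) + bal j (a - cdiv a (j+1)) := by
      have h9 := bal_succ (j+1) (a-1) (by omega)
      rw [show a - 1 + 1 = a by omega] at h9
      simpa using h9
    have hd_n : bal (j+1) n = bal (j+1) (n-1) + bal j (n - cdiv n (j+1)) := by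
      have h9 := bal_succ (j+1) (n-1) (by omega)
      rw [show n - 1 + 1 = n by omega] at h9
      simpa using h9
    have hPle : P ≤ bal j (n - a) := prod_le_bal j _ (n - a) (by omega)
    have hna : n ≤ a * (j + 1) := by
      have h1 : ∑ i2, q i2 ≤ Finset.univ.card • a :=
        Finset.sum_le_card_nsmul _ _ _ (fun i _ => hmax' i)
      simp only [Finset.card_univ, Fintype.card_fin, smul_eq_mul] at h1
      have : (j + 1) * a = a * (j + 1) := by ring
      omega
    have hkey := key (j+1) a n hk hka (by omega) hna hn'
    simp only [Nat.add_sub_cancel] at hkey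
    have hprod_split : a * P = (a - 1) * P + P := by
      have he : a = (a - 1) + 1 := by omega
      calc a * P = ((a-1) + 1) * P := by rw [← he]
      _ = (a-1) * P + P := by ring
    rw [hsumbal, hprodd, hprod_split, hd_a, hd_n]
    rw [hsb', hp'] at IHn
    omega

lemma witness (k n : ℕ) (hk : 3 ≤ k) (hn : k ≤ n) :
    ∃ q : Fin k → ℕ, (∑ i, q i) = n ∧ (∀ i, q i < n) ∧ (∏ i, q i) = bal k n := by
  set d := n / k with hd
  set r := n % k with hr
  have hrk : r < k := Nat.mod_lt _ (by omega)
  have hdm : k * d + r = n := Nat.div_add_mod n k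
  have h1 : ∑ i : Fin k, (if (i : ℕ) < r then (1:ℕ) else 0) = r := by
    rw [Fin.sum_univ_eq_sum_range (fun i => if i < r then (1:ℕ) else 0) k]
    rw [Finset.sum_boole]
    rw [show (Finset.range k).filter (fun i => i < r) = Finset.range r by
      ext x; simp [Finset.mem_filter, Finset.mem_range]; omega]
    simp
  have hcard : (Finset.univ.filter (fun i : Fin k => (i : ℕ) < r)).card = r := by
    have h2 : (∑ i : Fin k, if (i : ℕ) < r then (1:ℕ) else 0) =
        ((Finset.univ.filter (fun i : Fin k => (i : ℕ) < r)).card : ℕ) :=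
      by exact_mod_cast Finset.sum_boole (fun i : Fin k => (i : ℕ) < r) Finset.univ
    rw [h1] at h2
    exact_mod_cast h2.symm
  have hcard2 : (Finset.univ.filter (fun i : Fin k => ¬ (i : ℕ) < r)).card = k - r := by
    have h3 := Finset.card_filter_add_card_filter_not
      (s := (Finset.univ : Finset (Fin k))) (p := fun i : Fin k => (i : ℕ) < r)
    simp only [Finset.card_univ, Fintype.card_fin] at h3
    omega
  refine ⟨fun i => d + if (i : ℕ) < r then 1 else 0, ?_, ?_, ?_⟩
  · rw [Finset.sum_add_distrib, Finset.sum_const, Finset.card_univ, Fintype.card_fin,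
      smul_eq_mul, h1]
    omega
  · intro i
    show d + (if (i : ℕ) < r then 1 else 0) < n
    have h3 : k * d ≤ n := by omega
    have h4 : 3 * d ≤ k * d := Nat.mul_le_mul_right d (by omega)
    have h5 : (if (i : ℕ) < r then (1:ℕ) else 0) ≤ 1 := by split <;> omega
    omega
  · have hfun : (fun i : Fin k => d + if (i : ℕ) < r then 1 else 0) =
        fun i : Fin k => if (i : ℕ) < r then d + 1 else d := by
      funext i
      split <;> omega
    calc ∏ i : Fin k, (d + if (i : ℕ) < r then 1 else 0)
        = ∏ i : Fin k, (if (i : ℕ) < r then d + 1 else d) := by rw [hfun]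
    _ = ((d+1) ^ r) * (d ^ (k - r)) := by
        rw [Finset.prod_ite, Finset.prod_const, Finset.prod_const, hcard, hcard2]
    _ = bal k n := by rw [show n = k * d + r by omega, bal_eval d r (by omega) hrk]

theorem g_unfold (k s : ℕ) : g k s = if s < k then 0
    else sSup {m | ∃ q : Fin k → ℕ, ∃ h : ∀ i, q i < s,
      (∑ i, q i) = s ∧ m = (∑ i, g k (q i)) + ∏ i, q i} :=
  Nat.strongRecOn_eq _ s

lemma p_eq (n k : ℕ) (hk : 3 ≤ k) (hn : k ≤ n) : p n k = bal k n := by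
  obtain ⟨q0, hs0, hl0, hp0⟩ := witness k n hk hn
  have hmem : bal k n ∈ {m | ∃ q : Fin k → ℕ, (∑ i, q i) = n ∧ (∀ i, q i < n) ∧ m = ∏ i, q i} :=
    ⟨q0, hs0, hl0, hp0.symm⟩
  have hub : ∀ m ∈ {m | ∃ q : Fin k → ℕ, (∑ i, q i) = n ∧ (∀ i, q i < n) ∧ m = ∏ i, q i},
      m ≤ bal k n := by
    rintro m ⟨q, h1, h2, rfl⟩
    exact prod_le_bal k q n h1
  exact le_antisymm (csSup_le ⟨bal k n, hmem⟩ hub) (le_csSup ⟨bal k n, hub⟩ hmem)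

lemma g_eq_bal (k : ℕ) (hk : 3 ≤ k) : ∀ n, k ≤ n → n ≤ k * (k - 1) → g k n = bal k n := by
  intro n
  induction n using Nat.strongRecOn with
  | ind n IH =>
  intro hn hn'
  rw [g_unfold, if_neg (by omega)]
  have hub : ∀ m ∈ {m | ∃ q : Fin k → ℕ, ∃ _h : ∀ i, q i < n,
      (∑ i, q i) = n ∧ m = (∑ i, g k (q i)) + ∏ i, q i}, m ≤ bal k n := by
    rintro m ⟨q, hlt, hsum, rfl⟩
    have hg : ∀ i, g k (q i) = bal k (q i) := by
      intro i
      rcases Nat.lt_or_ge (q i) k with h | h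
      · rw [g_unfold, if_pos h, bal_zero_of_lt (by omega) h]
      · exact IH (q i) (hlt i) h (le_trans (Nat.le_of_lt (hlt i)) hn')
    calc (∑ i, g k (q i)) + ∏ i, q i = (∑ i, bal k (q i)) + ∏ i, q i := by
          rw [Finset.sum_congr rfl fun i _ => hg i]
    _ ≤ bal k n := star k hk n hn hn' q hlt hsum
  obtain ⟨q0, hs0, hl0, hp0⟩ := witness k n hk hn
  set m0 := (∑ i, g k (q0 i)) + ∏ i, q0 i with hm0
  have hmem : m0 ∈ {m | ∃ q : Fin k → ℕ, ∃ _h : ∀ i, q i < n,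
      (∑ i, q i) = n ∧ m = (∑ i, g k (q i)) + ∏ i, q i} := ⟨q0, hl0, hs0, rfl⟩
  have hbm0 : bal k n ≤ m0 := by
    rw [hm0, ← hp0]
    exact Nat.le_add_left _ _
  exact le_antisymm (csSup_le ⟨m0, hmem⟩ hub) (hbm0.trans (le_csSup ⟨bal k n, hub⟩ hmem))

theorem g_eq_p_small (k n : ℕ) (hk : 3 ≤ k) (hn : k ≤ n) (hn' : n ≤ k * (k - 1)) :
    g k n = p n k := by
  rw [g_eq_bal k hk n hn hn', p_eq n k hk hn]
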